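/- Let 0 < q < 1 and let A(ω) = a₁ω + a₀, B(ω) = b₂ω² + b₁ω be real polynomials with b₀ = 0, b₁ ≠ 0, b₂ ≠ 0, b₁ − (1−q)a₀ ≠ 0, b₂ − (1−q)a₁ ≠ 0, and suppose q·b₁/(b₁ − (1−q)a₀) > 0. Let a = −b₁/b₂ ≠ 0 be the nonzero root of B, let c ≠ 0 be the nonzero root of B(ω) − (1−q)ω·A(ω) = (b₂ − (1−q)a₁)ω² + (b₁ − (1−q)a₀)ω, and let r ∈ ℝ be defined by q^{−r} = q·b₁/(b₁ − (1−q)a₀). Then the function ϱ(ω) := ω^r · (qω/a; q)_∞ / (ω/c; q)_∞, defined for real ω > 0 with (ω/c; q)_∞ ≠ 0, satisfies ϱ(ω)·(B(ω) − (1−q)ω·A(ω)) = B(qω)·ϱ(qω) at every ω > 0 where both sides are defined. -/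

import Mathlib

/-- The infinite q-Pochhammer symbol `(x; q)_∞ = ∏_{k=0}^∞ (1 − qᵏx)` over `ℝ`. -/
noncomputable def qPochR (q x : ℝ) : ℝ :=
  ∏' k : ℕ, (1 - q ^ k * x)

lemma multipliable_qpoch {q x : ℝ} (hq0 : 0 < q) (hq1 : q < 1) :
    Multipliable (fun k : ℕ => 1 - q ^ k * x) := by
  -- find N with ∀ k ≥ N, |q^k * x| ≤ 1/2
  have htend : Filter.Tendsto (fun k : ℕ => q ^ k * x) Filter.atTop (nhds 0) := by
    simpa using (tendsto_pow_atTop_nhds_zero_of_lt_one hq0.le hq1).mul_const x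
  have h2 : ∀ᶠ k : ℕ in Filter.atTop, |q ^ k * x| ≤ 1/2 := by
    have := htend.eventually (Metric.ball_mem_nhds (0:ℝ) (by norm_num : (0:ℝ) < 1/2))
    filter_upwards [this] with k hk
    rw [Real.dist_eq, sub_zero] at hk; linarith
  obtain ⟨N, hN⟩ := Filter.eventually_atTop.1 h2
  set g : ℕ → ℝ := fun k => 1 - q ^ (k + N) * x with hg
  suffices hmg : Multipliable g by
    exact (hmg.hasProd.prod_range_mul (f := fun k : ℕ => 1 - q ^ k * x)).multipliable
  have hgpos : ∀ k, 0 < g k := by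
    intro k
    have := hN (k + N) (by omega)
    have := abs_le.1 this
    simp only [hg]
    linarith [this.2]
  have hsum : Summable fun k => Real.log (g k) := by
    have hs : Summable fun k : ℕ => 2 * (q ^ (k + N) * |x|) := by
      apply Summable.mul_left
      apply Summable.mul_right
      exact (summable_geometric_of_lt_one hq0.le hq1).comp_injective (add_left_injective N)
    apply Summable.of_abs
    apply hs.of_nonneg_of_le (fun k => abs_nonneg _)
    intro k
    have hb := abs_le.1 (hN (k + N) (by omega))
    have hq := hgpos k
    have hgk : g k = 1 - q ^ (k + N) * x := rfl
    have hxe : q ^ (k+N) * |x| = |q^(k+N) * x| := by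
      rw [abs_mul, abs_of_nonneg (pow_nonneg hq0.le _)]
    have hu0 : 0 ≤ |q ^ (k + N) * x| := abs_nonneg _
    rw [abs_le]
    constructor
    · have h1 : 1 - (g k)⁻¹ ≤ Real.log (g k) := Real.one_sub_inv_le_log_of_pos hq
      have hginvpos : 0 < (g k)⁻¹ := inv_pos.2 hq
      have hginv : (g k)⁻¹ ≤ 2 := by
        rw [inv_le_comm₀ hq (by norm_num)]
        rw [hgk]; linarith [hb.2]
      have key : 1 - (g k)⁻¹ = -(q ^ (k + N) * x) * (g k)⁻¹ := by
        rw [hgk] at hq ⊢; field_simp; ring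
      have s1 : -|q ^ (k + N) * x| * (g k)⁻¹ ≤ -(q ^ (k + N) * x) * (g k)⁻¹ :=
        mul_le_mul_of_nonneg_right (by linarith [le_abs_self (q ^ (k + N) * x)]) hginvpos.le
      have s2 : -|q ^ (k + N) * x| * 2 ≤ -|q ^ (k + N) * x| * (g k)⁻¹ := by
        nlinarith
      linarith [hxe ▸ s2]
    · have h1 : Real.log (g k) ≤ g k - 1 := Real.log_le_sub_one_of_pos hq
      rw [hgk] at h1
      linarith [neg_abs_le (q ^ (k + N) * x), hxe ▸ hu0, le_abs_self (q ^ (k + N) * x)]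
  exact Real.multipliable_of_summable_log hgpos hsum

lemma qPochR_rec {q : ℝ} (hq0 : 0 < q) (hq1 : q < 1) (x : ℝ) :
    qPochR q x = (1 - x) * qPochR q (q * x) := by
  have hm : Multipliable (fun k : ℕ => 1 - q ^ (k + 1) * x) := by
    have h := multipliable_qpoch (x := q * x) hq0 hq1
    refine h.congr fun k => ?_
    ring
  have := tprod_eq_zero_mul' (f := fun k : ℕ => 1 - q ^ k * x) hm
  unfold qPochR
  rw [this]
  congr 1
  · norm_num
  · exact tprod_congr fun k => by ring

/-- Let `0 < q < 1` and `A(ω) = a₁ω + a₀`, `B(ω) = b₂ω² + b₁ω` with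
`b₁ ≠ 0`, `b₂ ≠ 0`, `b₁ − (1−q)a₀ ≠ 0`, `b₂ − (1−q)a₁ ≠ 0`, and `q·b₁/(b₁−(1−q)a₀) > 0`.
Let `a = −b₁/b₂` be the nonzero root of `B`, let `c ≠ 0` be the nonzero root of
`B(ω) − (1−q)ωA(ω) = (b₂−(1−q)a₁)ω² + (b₁−(1−q)a₀)ω`, and let `r` satisfy
`q^{−r} = q·b₁/(b₁−(1−q)a₀)`.  Then `ϱ(ω) = ω^r·(qω/a;q)_∞/(ω/c;q)_∞` (real power for
`ω > 0`) satisfies `ϱ(ω)(B(ω) − (1−q)ωA(ω)) = B(qω)ϱ(qω)` at every `ω > 0` where both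
sides are defined. -/
theorem stmt_9 (q a₀ a₁ b₁ b₂ a c r : ℝ) (hq0 : 0 < q) (hq1 : q < 1)
    (A B : ℝ → ℝ)
    (hA : ∀ ω : ℝ, A ω = a₁ * ω + a₀)
    (hB : ∀ ω : ℝ, B ω = b₂ * ω ^ 2 + b₁ * ω)
    (hb₁ : b₁ ≠ 0) (hb₂ : b₂ ≠ 0)
    (hlin : b₁ - (1 - q) * a₀ ≠ 0) (hlead : b₂ - (1 - q) * a₁ ≠ 0)
    (hpos : 0 < q * b₁ / (b₁ - (1 - q) * a₀))
    (ha : a = -b₁ / b₂) (ha0 : a ≠ 0)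
    (hc0 : c ≠ 0) (hcroot : (b₂ - (1 - q) * a₁) * c ^ 2 + (b₁ - (1 - q) * a₀) * c = 0)
    (hr : q ^ (-r) = q * b₁ / (b₁ - (1 - q) * a₀))
    (ϱ : ℝ → ℝ)
    (hϱ : ∀ ω : ℝ, 0 < ω → ϱ ω = ω ^ r * qPochR q (q * ω / a) / qPochR q (ω / c)) :
    ∀ ω : ℝ, 0 < ω → qPochR q (ω / c) ≠ 0 → qPochR q (q * ω / c) ≠ 0 →
      ϱ ω * (B ω - (1 - q) * ω * A ω) = B (q * ω) * ϱ (q * ω) := by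
  intro ω hω hS hS'
  have hqω : 0 < q * ω := mul_pos hq0 hω
  have rec1 : qPochR q (ω / c) = (1 - ω / c) * qPochR q (q * ω / c) := by
    have h := qPochR_rec hq0 hq1 (ω / c)
    rwa [show q * (ω / c) = q * ω / c by ring] at h
  have rec2 : qPochR q (q * ω / a) = (1 - q * ω / a) * qPochR q (q * (q * ω) / a) := by
    have h := qPochR_rec hq0 hq1 (q * ω / a)
    rwa [show q * (q * ω / a) = q * (q * ω) / a by ring] at h
  have h1c : 1 - ω / c ≠ 0 := fun h => hS (by rw [rec1, h, zero_mul])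
  have ha' : a * b₂ = -b₁ := by rw [ha]; field_simp
  have hcr : (b₂ - (1 - q) * a₁) * c + (b₁ - (1 - q) * a₀) = 0 := by
    have h := hcroot
    have : c * ((b₂ - (1 - q) * a₁) * c + (b₁ - (1 - q) * a₀)) = 0 := by
      linear_combination h
    rcases mul_eq_zero.1 this with h' | h'
    · exact absurd h' hc0
    · exact h'
  have hqrpos : (0:ℝ) < q ^ (r:ℝ) := Real.rpow_pos_of_pos hq0 r
  have hqr : q ^ (r:ℝ) * (q * b₁) = b₁ - (1 - q) * a₀ := by
    rw [Real.rpow_neg hq0.le] at hr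
    have h2 : (q ^ (r:ℝ))⁻¹ * (b₁ - (1 - q) * a₀) = q * b₁ := by
      rw [hr]; field_simp
    field_simp at h2
    linarith [h2]
  have hrω : (q * ω) ^ (r:ℝ) = q ^ (r:ℝ) * ω ^ (r:ℝ) := Real.mul_rpow hq0.le hω.le
  have hE : B ω - (1 - q) * ω * A ω = (b₁ - (1 - q) * a₀) * ω * (1 - ω / c) := by
    rw [hB, hA]
    field_simp
    linear_combination ω * hcr
  have hBq : B (q * ω) = b₁ * q * ω * (1 - q * ω / a) := by
    rw [hB]
    field_simp
    linear_combination (q * ω) * ha'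
  rw [hϱ ω hω, hϱ (q * ω) hqω, hE, hBq, rec1, rec2, hrω]
  have hden : (1 - ω / c) * qPochR q (q * ω / c) ≠ 0 := mul_ne_zero h1c hS'
  rw [div_mul_eq_mul_div, ← mul_div_assoc, div_eq_div_iff hden hS']
  linear_combination (-(ω * (1 - q * ω / a) * (1 - ω / c) * qPochR q (q * (q * ω) / a) *
    qPochR q (q * ω / c) * ω ^ (r:ℝ))) * hqr
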